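/- Let S be a positive face structure, α ∈ S_{n+2}, and y ∈ δδ(α). Then there is a unique upper path from y to γγ(α) all of whose faces lie in δ(α), i.e. a unique sequence a₀, …, a_m ∈ δ(α) with y ∈ δ(a₀), γ(a_m) = γγ(α), and γ(a_{i−1}) ∈ δ(a_i) for 1 ≤ i ≤ m. -/

import Mathlib

/-- A pre-hypergraph: dimension-indexed finite sets of faces together with
codomain functions `gam k : S_{k+1} → S_k` and domain assignments
`del k : S_{k+1} → Finset S_k`. -/
structure PreHG where
  faces : ℕ → Finset ℕ
  gam : ℕ → ℕ → ℕ
  del : ℕ → ℕ → Finset ℕ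

namespace PreHG

/-- δ extended to sets of faces. -/
def delS (S : PreHG) (k : ℕ) (A : Finset ℕ) : Finset ℕ := A.biUnion (S.del k)

/-- γ extended to sets of faces. -/
def gamS (S : PreHG) (k : ℕ) (A : Finset ℕ) : Finset ℕ := A.image (S.gam k)

/-- The set `ι(a) = δδ(a) ∩ γδ(a)` of internal faces of a face `a` of dimension `k+2`
(the result lives in dimension `k`). -/
def iota (S : PreHG) (k : ℕ) (a : ℕ) : Finset ℕ :=
  S.delS k (S.del (k+1) a) ∩ S.gamS k (S.del (k+1) a)

/-- One step of the upper order: `a ⊲⁺ b` on faces of dimension `k`: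
there is `α` of dimension `k+1` with `a ∈ δ(α)` and `γ(α) = b`. -/
def ltPlusOne (S : PreHG) (k : ℕ) (a b : ℕ) : Prop :=
  ∃ α ∈ S.faces (k+1), a ∈ S.del k α ∧ S.gam k α = b

/-- The upper order `<⁺` on faces of dimension `k` (transitive closure of `⊲⁺`). -/
def ltPlus (S : PreHG) (k : ℕ) : ℕ → ℕ → Prop :=
  Relation.TransGen (S.ltPlusOne k)

/-- One step of the lower order: `a ⊲⁻ b` iff `γ(a) ∈ δ(b)`, on faces of dimension `k`
(the empty relation in dimension 0). -/
def ltMinusOne (S : PreHG) : ℕ → ℕ → ℕ → Prop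
  | 0, _, _ => False
  | (k+1), a, b => a ∈ S.faces (k+1) ∧ b ∈ S.faces (k+1) ∧ S.gam k a ∈ S.del k b

/-- The lower order `<⁻` on faces of dimension `k` (transitive closure of `⊲⁻`). -/
def ltMinus (S : PreHG) (k : ℕ) : ℕ → ℕ → Prop :=
  Relation.TransGen (S.ltMinusOne k)

/-- Comparability in the upper order. -/
def perpPlus (S : PreHG) (k : ℕ) (a b : ℕ) : Prop := S.ltPlus k a b ∨ S.ltPlus k b a

/-- Comparability in the lower order. -/
def perpMinus (S : PreHG) (k : ℕ) (a b : ℕ) : Prop := S.ltMinus k a b ∨ S.ltMinus k b a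

/-- Iterated codomain `γ^{(l)}`: maps a face of dimension `l+m` down to dimension `l`. -/
def gDown (S : PreHG) (l : ℕ) : ℕ → ℕ → ℕ
  | 0, a => a
  | (m+1), a => gDown S l m (S.gam (l+m) a)

/-- The axioms of a positive hypergraph. -/
def IsHG (S : PreHG) : Prop :=
  (∀ k a, a ∈ S.faces (k+1) → S.gam k a ∈ S.faces k) ∧
  (∀ k a, a ∈ S.faces (k+1) → S.del k a ⊆ S.faces k) ∧
  (∀ k a, a ∈ S.faces (k+1) → (S.del k a).Nonempty) ∧
  (∀ a ∈ S.faces 1, (S.del 0 a).card = 1) ∧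
  (∃ N, ∀ k, N ≤ k → S.faces k = ∅)

/-- Globularity: for faces of dimension ≥ 2,
`{γγ(a)} = γδ(a) − δδ(a)` and `δγ(a) = δδ(a) − γδ(a)`. -/
def Globular (S : PreHG) : Prop :=
  ∀ k a, a ∈ S.faces (k+2) →
    ({S.gam k (S.gam (k+1) a)} : Finset ℕ)
        = S.gamS k (S.del (k+1) a) \ S.delS k (S.del (k+1) a) ∧
      S.del k (S.gam (k+1) a)
        = S.delS k (S.del (k+1) a) \ S.gamS k (S.del (k+1) a)

/-- Strictness: `<⁺` is irreflexive in every dimension. -/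
def StrictPlus (S : PreHG) : Prop := ∀ k, ∀ a ∈ S.faces k, ¬ S.ltPlus k a a

/-- `<⁺` is linear in dimension 0. -/
def LinearZero (S : PreHG) : Prop :=
  ∀ a ∈ S.faces 0, ∀ b ∈ S.faces 0, a = b ∨ S.ltPlus 0 a b ∨ S.ltPlus 0 b a

/-- Disjointness: no two faces of positive dimension are comparable in both orders. -/
def Disjointness (S : PreHG) : Prop :=
  ∀ k a b, a ∈ S.faces (k+1) → b ∈ S.faces (k+1) →
    ¬ (S.perpPlus (k+1) a b ∧ S.perpMinus (k+1) a b)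

/-- Pencil linearity: γ-fibers and δ-fibers are linearly ordered by `<⁺`. -/
def Pencil (S : PreHG) : Prop :=
  ∀ k x,
    (∀ a b, a ∈ S.faces (k+1) → b ∈ S.faces (k+1) →
      S.gam k a = x → S.gam k b = x → a = b ∨ S.perpPlus (k+1) a b) ∧
    (∀ a b, a ∈ S.faces (k+1) → b ∈ S.faces (k+1) →
      x ∈ S.del k a → x ∈ S.del k b → a = b ∨ S.perpPlus (k+1) a b)

/-- A positive face structure: a nonempty positive hypergraph satisfying
globularity, strictness, disjointness and pencil linearity. -/
def IsPFS (S : PreHG) : Prop :=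
  S.IsHG ∧ (S.faces 0).Nonempty ∧ S.Globular ∧ S.StrictPlus ∧ S.LinearZero ∧
    S.Disjointness ∧ S.Pencil

end PreHG

/-- An upper path from `y` to `γγ(α)` all of whose faces lie in `δ(α)`,
for `α` a face of dimension `k+2`. -/
def PreHG.IsDeltaPath (S : PreHG) (k α y : ℕ) (L : List ℕ) : Prop :=
  (∀ a ∈ L, a ∈ S.del (k+1) α) ∧
  (∃ a₀, L.head? = some a₀ ∧ y ∈ S.del k a₀) ∧
  (∃ am, L.getLast? = some am ∧ S.gam k am = S.gam k (S.gam (k+1) α)) ∧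
  List.Chain' (fun a b => S.gam k a ∈ S.del k b) L

namespace PreHG

variable {S : PreHG}

lemma aux_ltMinus_gam {m c d : ℕ} (h : S.ltMinus (m+1) c d) :
    S.ltPlus m (S.gam m c) (S.gam m d) := by
  induction h with
  | single h =>
      obtain ⟨hc, hd, hγ⟩ := h
      exact Relation.TransGen.single ⟨_, hd, hγ, rfl⟩
  | tail _ h ih =>
      obtain ⟨hc, hd, hγ⟩ := h
      exact ih.tail ⟨_, hd, hγ, rfl⟩

lemma aux_ltMinus_irrefl (hS : S.IsPFS) {m c : ℕ} (hc : c ∈ S.faces (m+1)) :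
    ¬ S.ltMinus (m+1) c c := fun h =>
  hS.2.2.2.1 m (S.gam m c) (hS.1.1 m c hc) (aux_ltMinus_gam h)

lemma aux_claimC {k a b : ℕ} (h : S.ltPlus (k+1) a b) :
    ∃ β βr, β ∈ S.faces (k+2) ∧ βr ∈ S.faces (k+2) ∧ a ∈ S.del (k+1) β ∧
      S.gam (k+1) βr = b ∧ (β = βr ∨ S.ltMinus (k+2) β βr) := by
  induction h with
  | single h =>
      obtain ⟨β, hβ, ha, hγ⟩ := h
      exact ⟨β, β, hβ, hβ, ha, hγ, Or.inl rfl⟩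
  | tail _ h ih =>
      obtain ⟨β', hβ', hb, hγ'⟩ := h
      obtain ⟨β, βr, hβ, hβr, ha, hγ, hor⟩ := ih
      have step : S.ltMinusOne (k+2) βr β' := ⟨hβr, hβ', by rw [hγ]; exact hb⟩
      refine ⟨β, β', hβ, hβ', ha, hγ', Or.inr ?_⟩
      rcases hor with rfl | hlt
      · exact Relation.TransGen.single step
      · exact hlt.tail step

/-- `δ(α)` is an antichain for `<⁺`. -/
lemma aux_antichain (hS : S.IsPFS) {k α a b : ℕ} (hα : α ∈ S.faces (k+2))
    (ha : a ∈ S.del (k+1) α) (hb : b ∈ S.del (k+1) α) :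
    ¬ S.ltPlus (k+1) a b := by
  intro h
  obtain ⟨β, βr, hβ, hβr, haβ, hγ, hor⟩ := aux_claimC h
  have stepr : S.ltMinusOne (k+2) βr α := ⟨hβr, hα, by rw [hγ]; exact hb⟩
  have hminus : S.ltMinus (k+2) β α := by
    rcases hor with rfl | hlt
    · exact Relation.TransGen.single stepr
    · exact hlt.tail stepr
  rcases (hS.2.2.2.2.2.2 (k+1) a).2 β α hβ hα haβ ha with rfl | hperp
  · exact aux_ltMinus_irrefl hS hβ hminus
  · exact hS.2.2.2.2.2.1 (k+1) β α hβ hα ⟨hperp, Or.inl hminus⟩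

/-- Uniqueness of the face of `δ(α)` containing a given face in its domain. -/
lemma aux_unique_container (hS : S.IsPFS) {k α a b x : ℕ} (hα : α ∈ S.faces (k+2))
    (ha : a ∈ S.del (k+1) α) (hb : b ∈ S.del (k+1) α)
    (hxa : x ∈ S.del k a) (hxb : x ∈ S.del k b) : a = b := by
  have haf : a ∈ S.faces (k+1) := hS.1.2.1 (k+1) α hα ha
  have hbf : b ∈ S.faces (k+1) := hS.1.2.1 (k+1) α hα hb
  rcases (hS.2.2.2.2.2.2 k x).2 a b haf hbf hxa hxb with h | h | h
  · exact h
  · exact absurd h (aux_antichain hS hα ha hb)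
  · exact absurd h (aux_antichain hS hα hb ha)

lemma aux_gamgam_not_mem (hS : S.IsPFS) {k α : ℕ} (hα : α ∈ S.faces (k+2)) :
    S.gam k (S.gam (k+1) α) ∉ S.delS k (S.del (k+1) α) := by
  intro h
  have hg := (hS.2.2.1 k α hα).1
  have : S.gam k (S.gam (k+1) α) ∈
      S.gamS k (S.del (k+1) α) \ S.delS k (S.del (k+1) α) := by
    rw [← hg]; exact Finset.mem_singleton_self _
  exact (Finset.mem_sdiff.1 this).2 h

lemma aux_step (hS : S.IsPFS) {k α a : ℕ} (hα : α ∈ S.faces (k+2))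
    (ha : a ∈ S.del (k+1) α) :
    S.gam k a = S.gam k (S.gam (k+1) α) ∨
      S.gam k a ∈ S.delS k (S.del (k+1) α) := by
  by_cases h : S.gam k a ∈ S.delS k (S.del (k+1) α)
  · exact Or.inr h
  · left
    have hg := (hS.2.2.1 k α hα).1
    have hmem : S.gam k a ∈ S.gamS k (S.del (k+1) α) \ S.delS k (S.del (k+1) α) :=
      Finset.mem_sdiff.2 ⟨Finset.mem_image_of_mem _ ha, h⟩
    rw [← hg] at hmem
    exact Finset.mem_singleton.1 hmem

lemma aux_exists (hS : S.IsPFS) {k α : ℕ} (hα : α ∈ S.faces (k+2)) :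
    ∀ x ∈ S.delS k (S.del (k+1) α), ∃ L, S.IsDeltaPath k α x L := by
  classical
  set U : ℕ → Finset ℕ := fun x => (S.faces k).filter (fun z => S.ltPlus k x z) with hU
  suffices key : ∀ n x, x ∈ S.delS k (S.del (k+1) α) → (U x).card < n →
      ∃ L, S.IsDeltaPath k α x L by
    intro x hx
    exact key ((U x).card + 1) x hx (Nat.lt_succ_self _)
  intro n
  induction n with
  | zero => intro x _ h; exact absurd h (Nat.not_lt_zero _)
  | succ n ih =>
      intro x hx hcard
      obtain ⟨a, ha, hxa⟩ := Finset.mem_biUnion.1 hx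
      have haf : a ∈ S.faces (k+1) := hS.1.2.1 (k+1) α hα ha
      have hone : S.ltPlusOne k x (S.gam k a) := ⟨a, haf, hxa, rfl⟩
      rcases aux_step hS hα ha with heq | hmem
      · refine ⟨[a], ?_, ⟨a, rfl, hxa⟩, ⟨a, rfl, heq⟩, List.isChain_singleton a⟩
        intro b hb
        rw [List.mem_singleton] at hb
        exact hb ▸ ha
      · have hgaf : S.gam k a ∈ S.faces k := hS.1.1 k a haf
        have hdec : (U (S.gam k a)).card < (U x).card := by
          apply Finset.card_lt_card
          constructor
          · intro z hz
            rw [hU] at hz ⊢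
            simp only [Finset.mem_filter] at hz ⊢
            exact ⟨hz.1, (Relation.TransGen.single hone).trans hz.2⟩
          · intro hsub
            have h1 : S.gam k a ∈ U x := by
              rw [hU]; simp only [Finset.mem_filter]
              exact ⟨hgaf, Relation.TransGen.single hone⟩
            have h2 := hsub h1
            rw [hU] at h2; simp only [Finset.mem_filter] at h2
            exact hS.2.2.2.1 k (S.gam k a) hgaf h2.2
        obtain ⟨L', hL'⟩ := ih (S.gam k a) hmem (Nat.lt_of_lt_of_le hdec (Nat.lt_succ_iff.1 hcard))
        obtain ⟨hLmem, ⟨a₀, ha₀, hga₀⟩, ⟨am, ham, hgam⟩, hchain⟩ := hL'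
        cases L' with
        | nil => simp at ha₀
        | cons c L'' =>
            have hc : a₀ = c := by simpa using ha₀.symm
            subst hc
            refine ⟨a :: a₀ :: L'', ?_, ⟨a, rfl, hxa⟩, ⟨am, ?_, hgam⟩, ?_⟩
            · intro b hb
              rcases List.mem_cons.1 hb with rfl | hb
              · exact ha
              · exact hLmem b hb
            · rw [List.getLast?_cons_cons]; exact ham
            · exact List.isChain_cons_cons.2 ⟨hga₀, hchain⟩

lemma aux_tail_path {k α x a c : ℕ} {L : List ℕ}
    (h : S.IsDeltaPath k α x (a :: c :: L)) :
    S.IsDeltaPath k α (S.gam k a) (c :: L) := by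
  obtain ⟨hmem, _, ⟨am, ham, hgam⟩, hchain⟩ := h
  simp only [List.Chain', List.isChain_cons_cons] at hchain
  refine ⟨fun b hb => hmem b (List.mem_cons_of_mem a hb),
    ⟨c, rfl, hchain.1⟩, ⟨am, ?_, hgam⟩, hchain.2⟩
  rw [List.getLast?_cons_cons] at ham
  exact ham

lemma aux_unique (hS : S.IsPFS) {k α : ℕ} (hα : α ∈ S.faces (k+2)) :
    ∀ (L : List ℕ), ∀ M x, S.IsDeltaPath k α x L → S.IsDeltaPath k α x M → L = M := by
  intro L
  induction L with
  | nil =>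
      intro M x hL _
      obtain ⟨_, ⟨a₀, h, _⟩, _, _⟩ := hL
      simp at h
  | cons a L' ih =>
      intro M x hL hM
      cases M with
      | nil =>
          obtain ⟨_, ⟨b₀, h, _⟩, _, _⟩ := hM
          simp at h
      | cons b M' =>
          obtain ⟨hLmem, ⟨a₀, ha₀, hxa₀⟩, hLlast, hLchain⟩ := hL
          obtain ⟨hMmem, ⟨b₀, hb₀, hxb₀⟩, hMlast, hMchain⟩ := hM
          have ha₀' : a₀ = a := by simpa using ha₀.symm
          have hb₀' : b₀ = b := by simpa using hb₀.symm
          rw [ha₀'] at hxa₀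
          rw [hb₀'] at hxb₀
          have haδ : a ∈ S.del (k+1) α := hLmem a List.mem_cons_self
          have hbδ : b ∈ S.del (k+1) α := hMmem b List.mem_cons_self
          have hab : a = b := aux_unique_container hS hα haδ hbδ hxa₀ hxb₀
          subst hab
          congr 1
          cases L' with
          | nil =>
              cases M' with
              | nil => rfl
              | cons d M'' =>
                  obtain ⟨am, ham, hgam⟩ := hLlast
                  have ham' : am = a := by simpa using ham.symm
                  rw [ham'] at hgam
                  simp only [List.Chain', List.isChain_cons_cons] at hMchain
                  exact absurd (Finset.mem_biUnion.2
                    ⟨d, hMmem d (List.mem_cons_of_mem _ List.mem_cons_self),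
                      by rw [← hgam]; exact hMchain.1⟩) (aux_gamgam_not_mem hS hα)
          | cons c L'' =>
              cases M' with
              | nil =>
                  obtain ⟨bm, hbm, hgbm⟩ := hMlast
                  have hbm' : bm = a := by simpa using hbm.symm
                  rw [hbm'] at hgbm
                  simp only [List.Chain', List.isChain_cons_cons] at hLchain
                  exact absurd (Finset.mem_biUnion.2
                    ⟨c, hLmem c (List.mem_cons_of_mem _ List.mem_cons_self),
                      by rw [← hgbm]; exact hLchain.1⟩) (aux_gamgam_not_mem hS hα)
              | cons d M'' =>
                  exact ih (d :: M'') (S.gam k a)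
                    (aux_tail_path ⟨hLmem, ⟨a, rfl, hxa₀⟩, hLlast, hLchain⟩)
                    (aux_tail_path ⟨hMmem, ⟨a, rfl, hxb₀⟩, hMlast, hMchain⟩)

end PreHG

/-- For `α ∈ S_{n+2}` and `y ∈ δδ(α)`, there is a unique upper
`δ(α)`-path from `y` to `γγ(α)`. -/
theorem stmt5 (S : PreHG) (hS : S.IsPFS) (k α y : ℕ)
    (hα : α ∈ S.faces (k+2)) (hy : y ∈ S.delS k (S.del (k+1) α)) :
    ∃! L : List ℕ, S.IsDeltaPath k α y L := by
  obtain ⟨L, hL⟩ := PreHG.aux_exists hS hα y hy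
  exact ⟨L, hL, fun M hM => PreHG.aux_unique hS hα M L y hM hL⟩
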